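/- The group G(9₄₈) is generated by the three elements x₁, x₂, x₇; that is, the subgroup of G(9₄₈) generated by {x₁, x₂, x₇} is the whole group. -/

import Mathlib

/-- Relators of the Wirtinger presentation of the group of the knot `9₄₈`.
Generator `i : Fin 9` stands for `xᵢ₊₁`; the relation `a b a⁻¹ = c` is encoded
as the relator `a * b * a⁻¹ * c⁻¹`. -/
def rels948 : Set (FreeGroup (Fin 9)) :=
  let x : Fin 9 → FreeGroup (Fin 9) := FreeGroup.of
  { x 0 * x 1 * (x 0)⁻¹ * (x 2)⁻¹,
    x 3 * x 1 * (x 3)⁻¹ * (x 0)⁻¹,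
    x 1 * x 3 * (x 1)⁻¹ * (x 7)⁻¹,
    x 5 * x 7 * (x 5)⁻¹ * (x 6)⁻¹,
    x 6 * x 0 * (x 6)⁻¹ * (x 5)⁻¹,
    x 0 * x 6 * (x 0)⁻¹ * (x 8)⁻¹,
    x 4 * x 8 * (x 4)⁻¹ * (x 2)⁻¹,
    x 2 * x 5 * (x 2)⁻¹ * (x 4)⁻¹,
    x 5 * x 3 * (x 5)⁻¹ * (x 4)⁻¹ }

/-- The group `G(9₄₈)` of the knot `9₄₈`, given by its Wirtinger presentation. -/
def G948 : Type := PresentedGroup rels948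

instance : Group G948 := by unfold G948; infer_instance

/-- The image `xᵢ₊₁` of the `i`-th generator in `G(9₄₈)`. -/
def x948 (i : Fin 9) : G948 := PresentedGroup.of i

lemma rel948 (i j k : Fin 9)
    (h : FreeGroup.of i * FreeGroup.of j * (FreeGroup.of i)⁻¹ * (FreeGroup.of k)⁻¹ ∈ rels948) :
    x948 i * x948 j * (x948 i)⁻¹ = x948 k := by
  have h1 : PresentedGroup.mk rels948
      (FreeGroup.of i * FreeGroup.of j * (FreeGroup.of i)⁻¹ * (FreeGroup.of k)⁻¹) = 1 :=
    (QuotientGroup.eq_one_iff _).mpr (Subgroup.subset_normalClosure h)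
  simp only [map_mul, map_inv] at h1
  exact mul_inv_eq_one.mp h1

/-- The group `G(9₄₈)` is generated by `x₁`, `x₂` and `x₇`. -/
theorem G948_generated_by_x1_x2_x7 :
    Subgroup.closure {x948 0, x948 1, x948 6} = (⊤ : Subgroup G948) := by
  set H := Subgroup.closure {x948 0, x948 1, x948 6} with hH
  have h0 : x948 0 ∈ H := Subgroup.subset_closure (by simp)
  have h1 : x948 1 ∈ H := Subgroup.subset_closure (by simp)
  have h6 : x948 6 ∈ H := Subgroup.subset_closure (by simp)
  have e2 := rel948 0 1 2 (Or.inl rfl)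
  have e5 := rel948 6 0 5 (Or.inr (Or.inr (Or.inr (Or.inr (Or.inl rfl)))))
  have e8 := rel948 0 6 8 (Or.inr (Or.inr (Or.inr (Or.inr (Or.inr (Or.inl rfl))))))
  have e7 := rel948 5 7 6 (Or.inr (Or.inr (Or.inr (Or.inl rfl))))
  have e3 := rel948 1 3 7 (Or.inr (Or.inr (Or.inl rfl)))
  have e4 := rel948 2 5 4 (Or.inr (Or.inr (Or.inr (Or.inr (Or.inr (Or.inr (Or.inr (Or.inl rfl))))))))
  have h2 : x948 2 ∈ H := e2 ▸ mul_mem (mul_mem h0 h1) (inv_mem h0)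
  have h5 : x948 5 ∈ H := e5 ▸ mul_mem (mul_mem h6 h0) (inv_mem h6)
  have h8 : x948 8 ∈ H := e8 ▸ mul_mem (mul_mem h0 h6) (inv_mem h0)
  have h7 : x948 7 ∈ H := by
    have : x948 7 = (x948 5)⁻¹ * x948 6 * x948 5 := by
      rw [← e7]; group
    rw [this]; exact mul_mem (mul_mem (inv_mem h5) h6) h5
  have h3 : x948 3 ∈ H := by
    have : x948 3 = (x948 1)⁻¹ * x948 7 * x948 1 := by
      rw [← e3]; group
    rw [this]; exact mul_mem (mul_mem (inv_mem h1) h7) h1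
  have h4 : x948 4 ∈ H := e4 ▸ mul_mem (mul_mem h2 h5) (inv_mem h2)
  rw [eq_top_iff, ← show Subgroup.closure (Set.range x948) = (⊤ : Subgroup G948) from PresentedGroup.closure_range_of rels948, Subgroup.closure_le]
  rintro _ ⟨i, rfl⟩
  fin_cases i <;> assumption
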